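/- arXiv:2305.09001 — 2 statements merged into one kernel-verified Lean document; each statement's English description precedes it below -/
import Mathlib

section
/- The set of points where a convex function u : ℝⁿ → ℝ is not differentiable is contained in a countable union of Lipschitz hypersurfaces (Lipschitz (n−1)-dimensional surfaces). -/
open Set

/-- A Lipschitz `n`-dimensional surface (hypersurface) in `ℝ^{n+1}`: the graph, in some
orthonormal coordinate system, of a Lipschitz function from an open subset of `ℝ^n` to `ℝ`. -/
def IsLipschitzHypersurface (n : ℕ) (S : Set (EuclideanSpace ℝ (Fin (n + 1)))) : Prop :=
  ∃ (e : EuclideanSpace ℝ (Fin (n + 1)) ≃ₗᵢ[ℝ] EuclideanSpace ℝ (Fin (n + 1)))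
    (U : Set (EuclideanSpace ℝ (Fin n))) (f : EuclideanSpace ℝ (Fin n) → ℝ) (K : NNReal),
    IsOpen U ∧ LipschitzWith K f ∧
    S = e ⁻¹' {x | (WithLp.toLp 2 (fun i : Fin n => x i.castSucc) : EuclideanSpace ℝ (Fin n)) ∈ U ∧
          x (Fin.last n) = f (WithLp.toLp 2 (fun i : Fin n => x i.castSucc) : EuclideanSpace ℝ (Fin n))}

namespace NondiffHypersurfaceAux

open Set Metric Filter Topology

noncomputable section

variable {n : ℕ}


def projE {n : ℕ} (x : EuclideanSpace ℝ (Fin (n+1))) : EuclideanSpace ℝ (Fin n) :=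
  (WithLp.toLp 2 (fun i : Fin n => x i.castSucc) : EuclideanSpace ℝ (Fin n))

def snocE {n : ℕ} (y : EuclideanSpace ℝ (Fin n)) (t : ℝ) : EuclideanSpace ℝ (Fin (n+1)) :=
  WithLp.toLp 2 (Fin.snoc y t : Fin (n+1) → ℝ)

@[simp] lemma snocE_castSucc (y : EuclideanSpace ℝ (Fin n)) (t : ℝ) (i : Fin n) :
    snocE y t i.castSucc = y i := by
  simp [snocE, Fin.snoc_castSucc]

@[simp] lemma snocE_last (y : EuclideanSpace ℝ (Fin n)) (t : ℝ) :
    snocE y t (Fin.last n) = t := by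
  simp [snocE]

@[simp] lemma projE_snocE (y : EuclideanSpace ℝ (Fin n)) (t : ℝ) : projE (snocE y t) = y := by
  ext i; simp [projE]

lemma snocE_projE (x : EuclideanSpace ℝ (Fin (n+1))) : snocE (projE x) (x (Fin.last n)) = x := by
  ext j
  refine Fin.lastCases ?_ ?_ j
  · simp
  · intro i; simp [projE]

lemma abs_coord_le_norm (x : EuclideanSpace ℝ (Fin (n+1))) (i : Fin (n+1)) : |x i| ≤ ‖x‖ := by
  rw [EuclideanSpace.norm_eq]
  have h1 : |x i| ^ 2 ≤ ∑ j, ‖x j‖ ^ 2 := by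
    refine Finset.single_le_sum (f := fun j => ‖x j‖ ^ 2) (fun j _ => by positivity) (Finset.mem_univ i) |>.trans_eq' ?_
    simp [Real.norm_eq_abs]
  calc |x i| = Real.sqrt (|x i| ^ 2) := by rw [Real.sqrt_sq_eq_abs, abs_abs]
  _ ≤ _ := Real.sqrt_le_sqrt h1

lemma norm_snocE_sub (y y' : EuclideanSpace ℝ (Fin n)) (t : ℝ) :
    ‖snocE y t - snocE y' t‖ = ‖y - y'‖ := by
  rw [EuclideanSpace.norm_eq, EuclideanSpace.norm_eq]
  congr 1
  rw [Fin.sum_univ_castSucc]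
  simp [PiLp.sub_apply]

lemma snocE_add_single (y : EuclideanSpace ℝ (Fin n)) (t s : ℝ) :
    snocE y t + s • EuclideanSpace.single (Fin.last n) (1:ℝ) = snocE y (t + s) := by
  ext j
  refine Fin.lastCases ?_ ?_ j
  · simp [PiLp.add_apply, PiLp.smul_apply]
  · intro i
    simp [PiLp.add_apply, PiLp.smul_apply, EuclideanSpace.single_apply,
      (Fin.castSucc_lt_last i).ne]


theorem oneDim {h : ℝ → ℝ} (hc : ConvexOn ℝ univ h) (hnd : ¬ DifferentiableAt ℝ h 0) :
    ∃ p q : ℚ, p < q ∧ (∀ s : ℝ, 0 ≤ s → (q : ℝ) * s + h 0 ≤ h s) ∧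
      (∀ s : ℝ, s ≤ 0 → (p : ℝ) * s + h 0 ≤ h s) := by
  have mono := hc.slope_mono (mem_univ (0:ℝ))
  have hmem : ∀ s : ℝ, s ≠ 0 → s ∈ ((univ : Set ℝ) \ {0}) := fun s hs => ⟨trivial, by simpa using hs⟩
  set SL := slope h 0 '' Iio 0 with hSL
  set SR := slope h 0 '' Ioi 0 with hSR
  have neL : SL.Nonempty := ⟨_, ⟨-1, by norm_num, rfl⟩⟩
  have neR : SR.Nonempty := ⟨_, ⟨1, by norm_num, rfl⟩⟩
  have hLR : ∀ zl ∈ SL, ∀ zr ∈ SR, zl ≤ zr := by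
    rintro _ ⟨s, hs, rfl⟩ _ ⟨t, ht, rfl⟩
    exact mono (hmem s (ne_of_lt hs)) (hmem t (ne_of_gt ht)) (le_of_lt (lt_trans hs ht))
  have bddL : BddAbove SL := ⟨_, fun z hz => hLR z hz _ ⟨1, by norm_num, rfl⟩⟩
  have bddR : BddBelow SR := ⟨_, fun z hz => hLR _ ⟨-1, by norm_num, rfl⟩ z hz⟩
  set a := sSup SL with ha'
  set b := sInf SR with hb'
  have hab : a ≤ b := csSup_le neL fun z hz => le_csInf neR fun w hw => hLR z hz w hw
  have ha : ∀ s : ℝ, s < 0 → slope h 0 s ≤ a := fun s hs => le_csSup bddL ⟨s, hs, rfl⟩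
  have hb : ∀ s : ℝ, 0 < s → b ≤ slope h 0 s := fun s hs => csInf_le bddR ⟨s, hs, rfl⟩
  have hslope : ∀ s : ℝ, s ≠ 0 → slope h 0 s * s = h s - h 0 := by
    intro s hs
    rw [slope_def_field]
    field_simp
    ring
  rcases lt_or_ge a b with hlt | hge
  · obtain ⟨p, hap, hpb⟩ := exists_rat_btwn hlt
    obtain ⟨q, hpq', hqb⟩ := exists_rat_btwn hpb
    refine ⟨p, q, by exact_mod_cast hpq', ?_, ?_⟩
    · intro s hs
      rcases eq_or_lt_of_le hs with heq | hs'
      · rw [← heq]; simp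
      · have h1 := hb s hs'
        have h2 := hslope s (ne_of_gt hs')
        nlinarith
    · intro s hs
      rcases eq_or_lt_of_le hs with heq | hs'
      · rw [heq]; simp
      · have h1 := ha s hs'
        have h2 := hslope s (ne_of_lt hs')
        nlinarith
  · have hba : a = b := le_antisymm hab hge
    exfalso; apply hnd
    have hder : HasDerivAt h a 0 := by
      rw [hasDerivAt_iff_tendsto_slope, Metric.tendsto_nhds]
      intro ε hε
      obtain ⟨z, hzmem, hz⟩ := (csInf_lt_iff bddR neR).mp
        (show sInf SR < b + ε by rw [← hb']; linarith)
      obtain ⟨s0, hs0, rfl⟩ := hzmem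
      obtain ⟨w, hwmem, hw⟩ := (lt_csSup_iff bddL neL).mp
        (show a - ε < sSup SL by rw [← ha']; linarith)
      obtain ⟨s1, hs1, rfl⟩ := hwmem
      have hδ : (0:ℝ) < min s0 (-s1) := lt_min hs0 (neg_pos.mpr hs1)
      filter_upwards [mem_nhdsWithin_of_mem_nhds (Metric.ball_mem_nhds (0:ℝ) hδ),
        self_mem_nhdsWithin] with s hball hsne
      have hsne' : (s:ℝ) ≠ 0 := hsne
      have habs : |s| < min s0 (-s1) := by simpa [Real.dist_eq] using hball
      rw [Real.dist_eq]
      rcases lt_or_gt_of_ne hsne' with hneg | hpos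
      · have hs1s : s1 ≤ s := by
          have : |s| < -s1 := lt_of_lt_of_le habs (min_le_right _ _)
          rw [abs_of_neg hneg] at this; linarith
        have h1 : slope h 0 s1 ≤ slope h 0 s :=
          mono (hmem _ (ne_of_lt hs1)) (hmem _ hsne') hs1s
        have h2 : slope h 0 s ≤ a := ha s hneg
        rw [abs_lt]; constructor <;> nlinarith
      · have hss0 : s ≤ s0 := by
          have : |s| < s0 := lt_of_lt_of_le habs (min_le_left _ _)
          rw [abs_of_pos hpos] at this; linarith
        have h1 : slope h 0 s ≤ slope h 0 s0 :=
          mono (hmem _ hsne') (hmem _ (ne_of_gt hs0)) hss0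
        have h2 : b ≤ slope h 0 s := hb s hpos
        rw [abs_lt]; constructor <;> nlinarith
    exact hder.differentiableAt


theorem convexOn_comp_line {F : Type*} [NormedAddCommGroup F] [NormedSpace ℝ F]
    {u : F → ℝ} (hu : ConvexOn ℝ univ u) (x v : F) :
    ConvexOn ℝ univ (fun t : ℝ => u (x + t • v)) := by
  refine ⟨convex_univ, ?_⟩
  intro s _ t _ α β hα hβ hαβ
  have hx : α • x + β • x = x := by rw [← add_smul, hαβ, one_smul]
  have hcomb : x + (α • s + β • t) • v = α • (x + s • v) + β • (x + t • v) := by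
    match_scalars <;> simp only [smul_eq_mul, mul_one] <;> linarith
  simp only []
  rw [hcomb]
  exact hu.2 trivial trivial hα hβ hαβ

set_option maxHeartbeats 2000000 in
theorem diff_of_partials {N : ℕ} (u : EuclideanSpace ℝ (Fin (N+1)) → ℝ)
    (hu : ConvexOn ℝ univ u) (x : EuclideanSpace ℝ (Fin (N+1)))
    (hd : ∀ i, DifferentiableAt ℝ (fun t : ℝ => u (x + t • EuclideanSpace.single i (1:ℝ))) 0) :
    DifferentiableAt ℝ u x := by
  classical
  set M : ℝ := ((N + 1 : ℕ) : ℝ) with hM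
  have hM0 : (0:ℝ) < M := by positivity
  set c : Fin (N+1) → ℝ := fun i => deriv (fun t : ℝ => u (x + t • EuclideanSpace.single i (1:ℝ))) 0 with hc
  set ℓ : EuclideanSpace ℝ (Fin (N+1)) →L[ℝ] ℝ := ∑ i, c i • EuclideanSpace.proj i with hℓ
  have hℓapp : ∀ v : EuclideanSpace ℝ (Fin (N+1)), ℓ v = ∑ i, c i * v i := by
    intro v
    simp [hℓ, ContinuousLinearMap.sum_apply]
  have hℓs : ∀ i, ℓ (EuclideanSpace.single i (1:ℝ)) = c i := by
    intro i
    rw [hℓapp]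
    simp [EuclideanSpace.single_apply]
  set g : EuclideanSpace ℝ (Fin (N+1)) → ℝ := fun v => u (x + v) - u x - ℓ v with hg
  have hg0 : g 0 = 0 := by simp [hg]
  have hgconv : ConvexOn ℝ univ g := by
    refine ⟨convex_univ, ?_⟩
    intro v _ w _ α β hα hβ hαβ
    have hx' : α • x + β • x = x := by rw [← add_smul, hαβ, one_smul]
    have hcomb : x + (α • v + β • w) = α • (x + v) + β • (x + w) := by
      match_scalars <;> simp only [smul_eq_mul, mul_one] <;> linarith
    have hun : u (x + (α • v + β • w)) ≤ α * u (x + v) + β * u (x + w) := by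
      rw [hcomb]; exact hu.2 trivial trivial hα hβ hαβ
    have hℓ2 : ℓ (α • v + β • w) = α * ℓ v + β * ℓ w := by
      rw [map_add, map_smul, map_smul]; simp
    have hux : α * u x + β * u x = u x := by rw [← add_mul, hαβ, one_mul]
    simp only [hg, smul_eq_mul, hℓ2]
    nlinarith [hun, hux]
  set φ : Fin (N+1) → ℝ → ℝ := fun i t => g (t • EuclideanSpace.single i (1:ℝ)) with hφdef
  have hφ : ∀ i, HasDerivAt (φ i) 0 0 := by
    intro i
    have hline : HasDerivAt (fun t : ℝ => u (x + t • EuclideanSpace.single i (1:ℝ))) (c i) 0 :=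
      (hd i).hasDerivAt
    have h2 : HasDerivAt (fun t : ℝ => t * c i) (c i) 0 := by
      simpa using (hasDerivAt_id (0:ℝ)).mul_const (c i)
    have h3 := (hline.sub_const (u x)).sub h2
    have hfun : φ i = fun t : ℝ => u (x + t • EuclideanSpace.single i (1:ℝ)) - u x - t * c i := by
      funext t
      simp only [hφdef, hg]
      rw [map_smul, hℓs]
      simp [mul_comm]
    rw [hfun]
    rw [sub_self (c i)] at h3; exact h3
  have hrep : ∀ v : EuclideanSpace ℝ (Fin (N+1)), ∑ i, v i • EuclideanSpace.single i (1:ℝ) = v := by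
    intro v
    have := (EuclideanSpace.basisFun (Fin (N+1)) ℝ).sum_repr v
    simpa using this
  have habs : ∀ (v : EuclideanSpace ℝ (Fin (N+1))) (i : Fin (N+1)), |v i| ≤ ‖v‖ := by
    intro v i
    rw [EuclideanSpace.norm_eq]
    have h1 : |v i| ^ 2 ≤ ∑ j, ‖v j‖ ^ 2 := by
      refine Finset.single_le_sum (f := fun j => ‖v j‖ ^ 2) (fun j _ => by positivity)
        (Finset.mem_univ i) |>.trans_eq' ?_
      simp [Real.norm_eq_abs]
    calc |v i| = Real.sqrt (|v i| ^ 2) := by rw [Real.sqrt_sq_eq_abs, abs_abs]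
    _ ≤ _ := Real.sqrt_le_sqrt h1
  clear_value c ℓ g φ
  -- main estimate
  have main : HasFDerivAt u ℓ x := by
    rw [hasFDerivAt_iff_isLittleO_nhds_zero, Asymptotics.isLittleO_iff]
    intro ε hε
    set ε' : ℝ := ε / M with hε'
    have hε'0 : 0 < ε' := by positivity
    clear_value ε' 
    have hev : ∀ᶠ t in 𝓝 (0:ℝ), ∀ i, |φ i t| ≤ ε' * |t| := by
      rw [eventually_all]
      intro i
      have h1 := hφ i
      rw [hasDerivAt_iff_isLittleO] at h1
      have h2 := (Asymptotics.isLittleO_iff.mp h1) hε'0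
      have hφ0 : φ i 0 = 0 := by simp [hφdef, hg0]
      filter_upwards [h2] with t ht
      simpa [hφ0, Real.norm_eq_abs] using ht
    rw [Metric.eventually_nhds_iff] at hev
    obtain ⟨δ, hδ, hδp⟩ := hev
    have upper : ∀ v : EuclideanSpace ℝ (Fin (N+1)), ‖v‖ < δ / M → g v ≤ ε * ‖v‖ := by
      intro v hv
      have hvnn : (0:ℝ) ≤ ‖v‖ := norm_nonneg v
      have hsmall : ∀ i, |M * v i| < δ := by
        intro i
        rw [abs_mul, abs_of_pos hM0]
        have h1 : M * |v i| ≤ M * ‖v‖ := mul_le_mul_of_nonneg_left (habs v i) hM0.le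
        have h2 : M * ‖v‖ < δ := by
          rw [lt_div_iff₀ hM0] at hv; linarith
        linarith
      have hφb : ∀ i, |φ i (M * v i)| ≤ ε' * |M * v i| := by
        intro i
        exact hδp (by rw [Real.dist_eq, sub_zero]; exact hsmall i) i
      have hzsum : ∑ i, (1 / M) • ((M * v i) • EuclideanSpace.single i (1:ℝ)) = v := by
        have e1 : ∀ i : Fin (N+1), (1 / M) • ((M * v i) • EuclideanSpace.single i (1:ℝ))
            = v i • EuclideanSpace.single i (1:ℝ) := by
          intro i
          rw [smul_smul]
          congr 1
          field_simp
        rw [Finset.sum_congr rfl fun i _ => e1 i]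
        exact hrep v
      have hjensen : g v ≤ ∑ i, (1 / M) * φ i (M * v i) := by
        have h0 : ∀ i ∈ Finset.univ (α := Fin (N+1)), (0:ℝ) ≤ 1 / M := fun _ _ => by positivity
        have h1 : ∑ _i : Fin (N+1), (1 / M : ℝ) = 1 := by
          rw [Finset.sum_const, Finset.card_univ, Fintype.card_fin, nsmul_eq_mul, hM]
          field_simp
        have hmem : ∀ i ∈ Finset.univ (α := Fin (N+1)),
            (M * v i) • EuclideanSpace.single i (1:ℝ) ∈ (univ : Set (EuclideanSpace ℝ (Fin (N+1)))) :=
          fun _ _ => trivial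
        have := hgconv.map_sum_le h0 h1 hmem
        rw [hzsum] at this
        simp only [smul_eq_mul] at this
        simp only [hφdef]
        exact this
      have hterm : ∀ i, (1 / M) * φ i (M * v i) ≤ ε' * ‖v‖ := by
        intro i
        have h1 : φ i (M * v i) ≤ ε' * |M * v i| := (le_abs_self _).trans (hφb i)
        have h2 : ε' * |M * v i| = M * (ε' * |v i|) := by
          rw [abs_mul, abs_of_pos hM0]; ring
        have h3 : (1 / M) * φ i (M * v i) ≤ (1 / M) * (M * (ε' * |v i|)) := by
          apply mul_le_mul_of_nonneg_left _ (by positivity)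
          rw [← h2]; exact h1
        have h4 : (1 / M) * (M * (ε' * |v i|)) = ε' * |v i| := by field_simp
        have h5 : ε' * |v i| ≤ ε' * ‖v‖ := mul_le_mul_of_nonneg_left (habs v i) hε'0.le
        linarith
      calc g v ≤ ∑ i, (1 / M) * φ i (M * v i) := hjensen
      _ ≤ ∑ _i : Fin (N+1), ε' * ‖v‖ := Finset.sum_le_sum fun i _ => hterm i
      _ = M * (ε' * ‖v‖) := by
          rw [Finset.sum_const, Finset.card_univ, Fintype.card_fin, nsmul_eq_mul, hM]
      _ = ε * ‖v‖ := by rw [hε']; field_simp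
    have hpos : (0:ℝ) < δ / M := by positivity
    filter_upwards [Metric.ball_mem_nhds (0 : EuclideanSpace ℝ (Fin (N+1))) hpos] with v hv
    have hv' : ‖v‖ < δ / M := by simpa [dist_eq_norm] using hv
    have hv'' : ‖-v‖ < δ / M := by simpa [norm_neg] using hv'
    have hup := upper v hv'
    have hun := upper (-v) hv''
    have hlow : -g (-v) ≤ g v := by
      have hmid := hgconv.2 (mem_univ v) (mem_univ (-v)) (by norm_num : (0:ℝ) ≤ 1/2)
        (by norm_num : (0:ℝ) ≤ 1/2) (by norm_num)
      have : (1/2 : ℝ) • v + (1/2 : ℝ) • (-v) = 0 := by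
        rw [smul_neg]; abel
      rw [this, hg0] at hmid
      simp only [smul_eq_mul] at hmid
      have hmid' : (0:ℝ) ≤ 1 / 2 * g v + 1 / 2 * g (-v) := hmid
      linarith [hmid']
    have : |g v| ≤ ε * ‖v‖ := by
      rw [abs_le]
      constructor
      · rw [norm_neg] at hun; linarith
      · exact hup
    simp only [hg] at this
    simpa [Real.norm_eq_abs] using this
  exact main.differentiableAt

theorem exists_hypersurface_of_width (A : Set (EuclideanSpace ℝ (Fin (n+1))))
    (e : EuclideanSpace ℝ (Fin (n + 1)) ≃ₗᵢ[ℝ] EuclideanSpace ℝ (Fin (n + 1))) (K : NNReal)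
    (hA : ∀ x1 ∈ A, ∀ x2 ∈ A,
      dist (e x1 (Fin.last n)) (e x2 (Fin.last n)) ≤ K * dist (projE (e x1)) (projE (e x2))) :
    ∃ S, IsLipschitzHypersurface n S ∧ A ⊆ S := by
  classical
  set D : Set (EuclideanSpace ℝ (Fin n)) := (fun x => projE (e x)) '' A with hD
  set f0 : EuclideanSpace ℝ (Fin n) → ℝ := fun y =>
    if h : ∃ x, x ∈ A ∧ projE (e x) = y then e h.choose (Fin.last n) else 0 with hf0
  have hval : ∀ x ∈ A, f0 (projE (e x)) = e x (Fin.last n) := by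
    intro x hx
    have hex : ∃ x', x' ∈ A ∧ projE (e x') = projE (e x) := ⟨x, hx, rfl⟩
    have h1 := hex.choose_spec
    have h2 := hA _ h1.1 _ hx
    rw [h1.2] at h2
    simp only [dist_self, mul_zero] at h2
    have h3 : e hex.choose (Fin.last n) = e x (Fin.last n) :=
      dist_le_zero.mp h2
    simp only [hf0, dif_pos hex]
    exact h3
  have hlip : LipschitzOnWith K f0 D := by
    rw [lipschitzOnWith_iff_dist_le_mul]
    rintro y1 ⟨x1, hx1, rfl⟩ y2 ⟨x2, hx2, rfl⟩
    rw [hval x1 hx1, hval x2 hx2]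
    exact hA x1 hx1 x2 hx2
  obtain ⟨g, hg, heq⟩ := hlip.extend_real
  refine ⟨e ⁻¹' {x | (WithLp.toLp 2 (fun i : Fin n => x i.castSucc) : EuclideanSpace ℝ (Fin n)) ∈ univ ∧
      x (Fin.last n) = g (WithLp.toLp 2 (fun i : Fin n => x i.castSucc) : EuclideanSpace ℝ (Fin n))},
    ⟨e, univ, g, K, isOpen_univ, hg, rfl⟩, ?_⟩
  intro x hx
  refine ⟨mem_univ _, ?_⟩
  have hmem : projE (e x) ∈ D := ⟨x, hx, rfl⟩
  show e x (Fin.last n) = g (projE (e x))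
  rw [← heq hmem, hval x hx]


end

end NondiffHypersurfaceAux

open NondiffHypersurfaceAux Metric Filter Topology

/-- The set of non-differentiability points of a convex function `u : ℝ^{n+1} → ℝ` is contained
in a countable union of Lipschitz hypersurfaces. -/
theorem nondifferentiability_set_subset_countable_union_lipschitz_hypersurfaces
    (n : ℕ) (u : EuclideanSpace ℝ (Fin (n + 1)) → ℝ)
    (hu : ConvexOn ℝ Set.univ u) :
    ∃ S : ℕ → Set (EuclideanSpace ℝ (Fin (n + 1))),
      (∀ i, IsLipschitzHypersurface n (S i)) ∧
      {x | ¬ DifferentiableAt ℝ u x} ⊆ ⋃ i, S i := by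
  classical
  have hcont : Continuous u := by
    have h1 := hu.continuousOn isOpen_univ
    rwa [continuousOn_univ] at h1
  set b : Fin (n+1) → EuclideanSpace ℝ (Fin (n+1)) :=
    fun i => EuclideanSpace.single i (1:ℝ) with hb
  set A : (Fin (n+1) × ℚ × ℚ × ℕ) → Set (EuclideanSpace ℝ (Fin (n+1))) := fun c =>
    {x | ‖x‖ < (c.2.2.2 : ℝ) ∧
      (∀ s : ℝ, 0 ≤ s → (c.2.2.1 : ℝ) * s + u x ≤ u (x + s • b c.1)) ∧
      (∀ s : ℝ, s ≤ 0 → (c.2.1 : ℝ) * s + u x ≤ u (x + s • b c.1))} with hA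
  have key : ∀ c : Fin (n+1) × ℚ × ℚ × ℕ,
      ∃ S, IsLipschitzHypersurface n S ∧ (c.2.1 < c.2.2.1 → A c ⊆ S) := by
    rintro ⟨i, p, q, m⟩
    by_cases hpq : p < q
    · -- Lipschitz constant on a ball
      set R : ℝ := 3 * (m:ℝ) + 1 with hR
      have hm0 : (0:ℝ) ≤ (m:ℝ) := Nat.cast_nonneg m
      have hconv2 : ConvexOn ℝ (ball (0:EuclideanSpace ℝ (Fin (n+1))) (R+1)) u :=
        hu.subset (subset_univ _) (convex_ball _ _)
      have hbd : Bornology.IsBounded (u '' ball (0:EuclideanSpace ℝ (Fin (n+1))) (R+1)) := by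
        refine (((isCompact_closedBall (0:EuclideanSpace ℝ (Fin (n+1))) (R+1)).image
          hcont).isBounded).subset ?_
        exact image_mono ball_subset_closedBall
      obtain ⟨L, hL⟩ := hconv2.exists_lipschitzOnWith_of_isBounded (lt_add_one R) hbd
      replace hL := lipschitzOnWith_iff_dist_le_mul.mp hL
      set σ : Equiv.Perm (Fin (n+1)) := Equiv.swap i (Fin.last n) with hσ
      set e : (EuclideanSpace ℝ (Fin (n+1)) ≃ₗᵢ[ℝ] EuclideanSpace ℝ (Fin (n+1))) :=
        LinearIsometryEquiv.piLpCongrLeft 2 ℝ ℝ σ with he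
      have hqp : (0:ℝ) < (q:ℝ) - (p:ℝ) := by
        have : (p:ℝ) < (q:ℝ) := by exact_mod_cast hpq
        linarith
      set KR : ℝ := 2 * (L:ℝ) / ((q:ℝ) - (p:ℝ)) with hKR
      have hKR0 : (0:ℝ) ≤ KR := by positivity
      have hsingle : e (b i) = EuclideanSpace.single (Fin.last n) (1:ℝ) := by
        rw [he, hb]
        have h1 := LinearIsometryEquiv.piLpCongrLeft_single (p := 2) (𝕜 := ℝ) σ i (1:ℝ)
        rw [show σ i = Fin.last n from Equiv.swap_apply_left _ _] at h1
        exact h1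
      have hcoord : ∀ x : EuclideanSpace ℝ (Fin (n+1)),
          e x = snocE (projE (e x)) (e x (Fin.last n)) :=
        fun x => (snocE_projE (e x)).symm
      have half : ∀ x1 ∈ A (i,p,q,m), ∀ x2 ∈ A (i,p,q,m),
          (e x2) (Fin.last n) - (e x1) (Fin.last n)
            ≤ KR * dist (projE (e x1)) (projE (e x2)) := by
        intro x1 hx1 x2 hx2
        simp only [hA, Set.mem_setOf_eq] at hx1 hx2
        obtain ⟨hm1, hq1, hp1⟩ := hx1
        obtain ⟨hm2, hq2, hp2⟩ := hx2
        rcases le_or_gt ((e x2) (Fin.last n) - (e x1) (Fin.last n)) 0 with hd0 | hd0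
        · have : 0 ≤ KR * dist (projE (e x1)) (projE (e x2)) :=
            mul_nonneg hKR0 dist_nonneg
          linarith
        · set y1 := projE (e x1) with hy1
          set y2 := projE (e x2) with hy2
          set t1 := (e x1) (Fin.last n) with ht1'
          set t2 := (e x2) (Fin.last n) with ht2'
          set d := t2 - t1 with hd
          set z1 := x1 + d • b i with hz1
          set z2 := x2 + (-d) • b i with hz2
          set D := dist y1 y2 with hD
          have hDnn : 0 ≤ D := dist_nonneg
          have ht1 : |t1| ≤ ‖x1‖ := by
            have h1 := abs_coord_le_norm (e x1) (Fin.last n)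
            rwa [e.norm_map] at h1
          have ht2 : |t2| ≤ ‖x2‖ := by
            have h1 := abs_coord_le_norm (e x2) (Fin.last n)
            rwa [e.norm_map] at h1
          have hdabs : |d| ≤ ‖x1‖ + ‖x2‖ := by
            rw [hd]
            calc |t2 - t1| ≤ |t2| + |t1| := abs_sub _ _
            _ ≤ ‖x1‖ + ‖x2‖ := by linarith
          have hnormb : ‖b i‖ = 1 := by
            rw [hb]; simpa using EuclideanSpace.norm_single (𝕜 := ℝ) i (1:ℝ)
          have hz1norm : ‖z1‖ < R := by
            calc ‖z1‖ ≤ ‖x1‖ + ‖d • b i‖ := norm_add_le _ _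
            _ = ‖x1‖ + |d| := by rw [norm_smul, hnormb, Real.norm_eq_abs, mul_one]
            _ < R := by rw [hR]; linarith
          have hz2norm : ‖z2‖ < R := by
            calc ‖z2‖ ≤ ‖x2‖ + ‖(-d) • b i‖ := norm_add_le _ _
            _ = ‖x2‖ + |d| := by
                rw [norm_smul, hnormb, Real.norm_eq_abs, mul_one, abs_neg]
            _ < R := by rw [hR]; linarith
          have hx1R : ‖x1‖ < R := by rw [hR]; linarith
          have hx2R : ‖x2‖ < R := by rw [hR]; linarith
          have hez1 : e z1 = snocE y1 t2 := by
            rw [hz1, map_add, e.map_smul, hsingle, hcoord x1, ← hy1, ← ht1',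
              snocE_add_single]
            congr 1
            rw [hd]; ring
          have hez2 : e z2 = snocE y2 t1 := by
            rw [hz2, map_add, e.map_smul, hsingle, hcoord x2, ← hy2, ← ht2',
              snocE_add_single]
            congr 1
            rw [hd]; ring
          have hdist1 : dist z1 x2 = D := by
            rw [← e.dist_map, hez1, hcoord x2, ← hy2, ← ht2', dist_eq_norm,
              norm_snocE_sub, hD, dist_eq_norm]
          have hdist2 : dist z2 x1 = D := by
            rw [← e.dist_map, hez2, hcoord x1, ← hy1, ← ht1', dist_eq_norm,
              norm_snocE_sub, hD, dist_eq_norm, norm_sub_rev]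
          have hu1 : (q:ℝ) * d + u x1 ≤ u z1 := hq1 d hd0.le
          have hu2 : (p:ℝ) * (-d) + u x2 ≤ u z2 := hp2 (-d) (by linarith)
          have hl1 : dist (u z1) (u x2) ≤ (L:ℝ) * D := by
            have h1 := hL z1 (mem_ball_zero_iff.mpr hz1norm) x2 (mem_ball_zero_iff.mpr hx2R)
            rwa [hdist1] at h1
          have hl2 : dist (u z2) (u x1) ≤ (L:ℝ) * D := by
            have h1 := hL z2 (mem_ball_zero_iff.mpr hz2norm) x1 (mem_ball_zero_iff.mpr hx1R)
            rwa [hdist2] at h1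
          rw [Real.dist_eq] at hl1 hl2
          clear_value z1 z2 d t1 t2 y1 y2 D KR
          have habs1 : u z1 - u x2 ≤ (L:ℝ) * D := (le_abs_self _).trans hl1
          have habs2 : u z2 - u x1 ≤ (L:ℝ) * D := (le_abs_self _).trans hl2
          have hr1 : ((q:ℝ) - (p:ℝ)) * d = (q:ℝ) * d - (p:ℝ) * d := by ring
          have hr2 : (p:ℝ) * (-d) = -((p:ℝ) * d) := by ring
          rw [hr2] at hu2
          have hcomb : ((q:ℝ) - (p:ℝ)) * d ≤ 2 * (L:ℝ) * D := by
            rw [hr1]; linarith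
          rw [hKR, div_mul_eq_mul_div, le_div_iff₀ hqp]
          have hr3 : d * ((q:ℝ) - (p:ℝ)) = ((q:ℝ) - (p:ℝ)) * d := by ring
          rw [hr3]
          linarith
      have width : ∀ x1 ∈ A (i,p,q,m), ∀ x2 ∈ A (i,p,q,m),
          dist ((e x1) (Fin.last n)) ((e x2) (Fin.last n))
            ≤ (KR.toNNReal : ℝ) * dist (projE (e x1)) (projE (e x2)) := by
        intro x1 h1 x2 h2
        rw [Real.coe_toNNReal _ hKR0, Real.dist_eq, abs_sub_le_iff]
        constructor
        · have h3 := half x2 h2 x1 h1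
          rwa [dist_comm (projE (e x2))] at h3
        · exact half x1 h1 x2 h2
      obtain ⟨S, hS, hsub⟩ :=
        exists_hypersurface_of_width (A (i,p,q,m)) e KR.toNNReal width
      exact ⟨S, hS, fun _ => hsub⟩
    · refine ⟨∅, ⟨LinearIsometryEquiv.refl ℝ _, ∅, fun _ => (0:ℝ), 0, isOpen_empty,
        LipschitzWith.const 0, ?_⟩, fun h => absurd h hpq⟩
      ext x
      simp
  have cover : ∀ x : EuclideanSpace ℝ (Fin (n+1)), ¬ DifferentiableAt ℝ u x →
      ∃ c : Fin (n+1) × ℚ × ℚ × ℕ, c.2.1 < c.2.2.1 ∧ x ∈ A c := by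
    intro x hx
    have hnall : ¬ ∀ i, DifferentiableAt ℝ
        (fun t : ℝ => u (x + t • EuclideanSpace.single i (1:ℝ))) 0 :=
      fun hall => hx (diff_of_partials u hu x hall)
    push_neg at hnall
    obtain ⟨i, hi⟩ := hnall
    obtain ⟨p, q, hpq, hq, hp⟩ :=
      oneDim (convexOn_comp_line hu x (EuclideanSpace.single i (1:ℝ))) hi
    obtain ⟨m, hm⟩ := exists_nat_gt ‖x‖
    refine ⟨⟨i, p, q, m⟩, hpq, ?_⟩
    simp only [hA, Set.mem_setOf_eq]
    refine ⟨hm, ?_, ?_⟩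
    · intro s hs
      have h1 := hq s hs
      simpa [hb] using h1
    · intro s hs
      have h1 := hp s hs
      simpa [hb] using h1
  choose T hT1 hT2 using key
  obtain ⟨gnat, hgnat⟩ := exists_surjective_nat (Fin (n+1) × ℚ × ℚ × ℕ)
  refine ⟨fun k => T (gnat k), fun k => hT1 _, ?_⟩
  intro x hx
  obtain ⟨c, hpq2, hxA⟩ := cover x hx
  obtain ⟨k, rfl⟩ := hgnat c
  exact Set.mem_iUnion.mpr ⟨k, hT2 _ hpq2 hxA⟩
end

section
/- Let u : ℝⁿ → ℝ ∪ {+∞} be a lower semicontinuous convex function and suppose (∇u)_# μ = ν, where μ and ν are Borel measures on ℝⁿ that vanish on every Lipschitz (n−1)-dimensional surface. Then for every Borel set E ⊂ ℝⁿ, μ(E) = ν(∂u(E)) (mass balance formula). -/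
open Set MeasureTheory

/-- The subdifferential of an `ℝ ∪ {+∞}`-valued function `u` at `z`. -/
def subdiffE (n : ℕ) (u : EuclideanSpace ℝ (Fin n) → EReal)
    (z : EuclideanSpace ℝ (Fin n)) : Set (EuclideanSpace ℝ (Fin n)) :=
  {p | ∀ x, u z + ((inner ℝ p (x - z) : ℝ) : EReal) ≤ u x}

namespace MassBalance

abbrev Esp (n : ℕ) := EuclideanSpace ℝ (Fin n)

variable {n : ℕ}

/-- Lipschitz hypersurfaces are measurable sets. -/
lemma IsLipschitzHypersurface.measurableSet {S : Set (Esp (n+1))}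
    (h : IsLipschitzHypersurface n S) : MeasurableSet S := by
  obtain ⟨e, U, f, K, hU, hf, rfl⟩ := h
  have hc : Continuous (fun x : Esp (n+1) => (WithLp.toLp 2 (fun i : Fin n => x i.castSucc) : Esp n)) :=
    (PiLp.continuous_toLp 2 _).comp (continuous_pi fun i => PiLp.continuous_apply 2 _ _)
  have h1 : MeasurableSet {x : Esp (n+1) |
      (WithLp.toLp 2 (fun i : Fin n => x i.castSucc) : Esp n) ∈ U ∧
        x (Fin.last n) = f (WithLp.toLp 2 (fun i : Fin n => x i.castSucc) : Esp n)} := by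
    apply MeasurableSet.inter
    · exact (hU.preimage hc).measurableSet
    · exact (isClosed_eq (PiLp.continuous_apply 2 _ _) (hf.continuous.comp hc)).measurableSet
  exact h1.preimage e.continuous.measurable

/-- The auxiliary projection dropping the `i`-th coordinate (after swapping `i` with the last). -/
def proj' (i : Fin (n+1)) (a : Esp (n+1)) : Esp n :=
  WithLp.toLp 2 (fun j : Fin n => a (Equiv.swap i (Fin.last n) j.castSucc))

lemma inner_split (i : Fin (n+1)) (a b : Esp (n+1)) :
    (inner ℝ a b : ℝ) = a i * b i + (inner ℝ (proj' i a) (proj' i b) : ℝ) := by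
  have h1 : (inner ℝ a b : ℝ) = ∑ j, a j * b j := by
    simp [PiLp.inner_apply, RCLike.inner_apply, conj_trivial, mul_comm]
  have h2 : (inner ℝ (proj' i a) (proj' i b) : ℝ) = ∑ j : Fin n, proj' i a j * proj' i b j := by
    simp [PiLp.inner_apply, RCLike.inner_apply, conj_trivial, mul_comm]
  rw [h1, h2, ← Equiv.sum_comp (Equiv.swap i (Fin.last n)) (fun j => a j * b j),
    Fin.sum_univ_castSucc]
  simp only [proj']
  rw [Equiv.swap_apply_right, add_comm]

lemma proj'_sub (i : Fin (n+1)) (a b : Esp (n+1)) :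
    proj' i (a - b) = proj' i a - proj' i b := by
  ext j; simp [proj']

lemma norm_proj'_le (i : Fin (n+1)) (a : Esp (n+1)) : ‖proj' i a‖ ≤ ‖a‖ := by
  have h := inner_split i a a
  rw [real_inner_self_eq_norm_sq, real_inner_self_eq_norm_sq] at h
  nlinarith [sq_nonneg (a i), norm_nonneg (proj' i a), norm_nonneg a]

section Rel

open scoped Classical

variable (Rel : Esp (n+1) → Esp (n+1) → Prop)

/-- Monotonicity of a relation. -/
def Mono : Prop := ∀ z p z' p', Rel z p → Rel z' p' → (0:ℝ) ≤ inner ℝ (z - z') (p - p')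

/-- Sequential closedness of a relation. -/
def SeqCl : Prop := ∀ (zs ps : ℕ → Esp (n+1)) (z p : Esp (n+1)),
    Filter.Tendsto zs Filter.atTop (nhds z) → Filter.Tendsto ps Filter.atTop (nhds p) →
    (∀ k, Rel (zs k) (ps k)) → Rel z p

/-- The set of points where the (multivalued) inverse of `Rel` takes at least two values. -/
def MultiSet : Set (Esp (n+1)) := {p | ∃ z z', z ≠ z' ∧ Rel z p ∧ Rel z' p}

set_option maxHeartbeats 2000000 in
/-- Key Lipschitz-graph lemma. -/
lemma subset_hypersurface (mono : Mono Rel) (i : Fin (n+1)) (q δ Rb : ℝ) (hδ : 0 < δ)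
    (hRb : 0 ≤ Rb) :
    ∃ H, IsLipschitzHypersurface n H ∧
      {p | ∃ z z', Rel z p ∧ Rel z' p ∧ ‖z‖ ≤ Rb ∧ ‖z'‖ ≤ Rb ∧ z i ≤ q ∧ q + δ ≤ z' i} ⊆ H := by
  classical
  set σ := Equiv.swap i (Fin.last n) with hσdef
  set S : Set (Esp (n+1)) :=
    {p | ∃ z z', Rel z p ∧ Rel z' p ∧ ‖z‖ ≤ Rb ∧ ‖z'‖ ≤ Rb ∧ z i ≤ q ∧ q + δ ≤ z' i} with hSdef
  set L : ℝ := 2 * Rb / δ with hLdef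
  have hL0 : 0 ≤ L := div_nonneg (by linarith) hδ.le
  -- the key Lipschitz estimate
  have key : ∀ p ∈ S, ∀ p' ∈ S, |p i - p' i| ≤ L * ‖proj' i p - proj' i p'‖ := by
    rintro p ⟨z, z', hz, hz', hzR, hz'R, hzq, hz'q⟩ p' ⟨w, w', hw, hw', hwR, hw'R, hwq, hw'q⟩
    set D := ‖proj' i p - proj' i p'‖ with hD
    have hD0 : 0 ≤ D := norm_nonneg _
    have hsub : proj' i (p - p') = proj' i p - proj' i p' := proj'_sub i p p'
    have cross : ∀ a : Esp (n+1), ‖a‖ ≤ 2*Rb →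
        |(inner ℝ (proj' i a) (proj' i (p - p')) : ℝ)| ≤ 2*Rb*D := by
      intro a ha
      calc |(inner ℝ (proj' i a) (proj' i (p - p')) : ℝ)|
          ≤ ‖proj' i a‖ * ‖proj' i (p - p')‖ := abs_real_inner_le_norm _ _
        _ ≤ (2*Rb) * D := by
            rw [hsub]
            exact mul_le_mul (le_trans (norm_proj'_le i a) ha) le_rfl (norm_nonneg _)
              (by linarith)
    have h1 := mono z' p w p' hz' hw
    have h2 := mono w' p' z p hw' hz
    rw [inner_split i] at h1 h2
    have e1 : (z' - w) i = z' i - w i := by simp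
    have e2 : (p - p') i = p i - p' i := by simp
    have e3 : (w' - z) i = w' i - z i := by simp
    have e4 : (p' - p) i = p' i - p i := by simp
    have hc1 : δ ≤ z' i - w i := by linarith
    have hc2 : δ ≤ w' i - z i := by linarith
    have hn1 : ‖z' - w‖ ≤ 2*Rb := le_trans (norm_sub_le _ _) (by linarith)
    have hn2 : ‖w' - z‖ ≤ 2*Rb := le_trans (norm_sub_le _ _) (by linarith)
    have t1 := cross (z' - w) hn1
    have hpp' : proj' i (p' - p) = -(proj' i (p - p')) := by
      rw [proj'_sub, proj'_sub]; abel
    have t2' : |(inner ℝ (proj' i (w' - z)) (proj' i (p' - p)) : ℝ)| ≤ 2*Rb*D := by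
      rw [hpp', inner_neg_right, abs_neg]
      exact cross (w' - z) hn2
    rw [e1, e2] at h1
    rw [e3, e4] at h2
    set s := p i - p' i with hs
    have habs1 := abs_le.1 t1
    have habs2 := abs_le.1 t2'
    -- δ * |s| ≤ 2*Rb*D
    have hds : δ * |s| ≤ 2*Rb*D := by
      rcases le_total s 0 with hs0 | hs0
      · rw [abs_of_nonpos hs0]
        nlinarith [mul_le_mul_of_nonneg_right hc1 (neg_nonneg.2 hs0)]
      · rw [abs_of_nonneg hs0]
        nlinarith [mul_le_mul_of_nonneg_right hc2 hs0]
    rw [hLdef, div_mul_eq_mul_div, le_div_iff₀ hδ]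
    calc |s| * δ = δ * |s| := mul_comm _ _
      _ ≤ 2*Rb*D := hds
      _ = 2*Rb*‖proj' i p - proj' i p'‖ := rfl
  -- construct the Lipschitz function
  set W : Set (Esp n) := proj' i '' S with hW
  set f0 : Esp n → ℝ := fun w => if h : ∃ p, p ∈ S ∧ proj' i p = w then h.choose i else 0
    with hf0def
  have hf0 : ∀ w ∈ W, ∃ p, p ∈ S ∧ proj' i p = w ∧ f0 w = p i := by
    intro w hw
    obtain ⟨p, hp, hpw⟩ := hw
    have hex : ∃ p, p ∈ S ∧ proj' i p = w := ⟨p, hp, hpw⟩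
    exact ⟨hex.choose, hex.choose_spec.1, hex.choose_spec.2, by rw [hf0def]; exact dif_pos hex⟩
  have hlip : LipschitzOnWith L.toNNReal f0 W := by
    rw [lipschitzOnWith_iff_dist_le_mul]
    intro w hw w' hw'
    obtain ⟨p, hp, hpw, hfw⟩ := hf0 w hw
    obtain ⟨p', hp', hpw', hfw'⟩ := hf0 w' hw'
    rw [hfw, hfw', Real.dist_eq, dist_eq_norm]
    calc |p i - p' i| ≤ L * ‖proj' i p - proj' i p'‖ := key p hp p' hp'
      _ = L * ‖w - w'‖ := by rw [hpw, hpw']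
      _ ≤ (L.toNNReal : ℝ) * ‖w - w'‖ :=
          mul_le_mul_of_nonneg_right (Real.le_coe_toNNReal L) (norm_nonneg _)
  obtain ⟨g, hg, hgf⟩ := hlip.extend_real
  refine ⟨(LinearIsometryEquiv.piLpCongrLeft 2 ℝ ℝ σ) ⁻¹'
      {x | (WithLp.toLp 2 (fun j : Fin n => x j.castSucc) : Esp n) ∈ (univ : Set (Esp n)) ∧
        x (Fin.last n) = g (WithLp.toLp 2 (fun j : Fin n => x j.castSucc) : Esp n)},
    ⟨LinearIsometryEquiv.piLpCongrLeft 2 ℝ ℝ σ, univ, g, L.toNNReal, isOpen_univ, hg, rfl⟩, ?_⟩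
  intro p hp
  have happ : ∀ j, (LinearIsometryEquiv.piLpCongrLeft 2 ℝ ℝ σ) p j = p (σ j) := by
    intro j
    have h1 : (LinearIsometryEquiv.piLpCongrLeft 2 ℝ ℝ σ) p j = p (σ.symm j) := by
      simp only [LinearIsometryEquiv.piLpCongrLeft_apply, Equiv.piCongrLeft'_apply]
    rw [h1, hσdef, Equiv.symm_swap]
  constructor
  · exact mem_univ _
  · have hlast : (LinearIsometryEquiv.piLpCongrLeft 2 ℝ ℝ σ) p (Fin.last n) = p i := by
      rw [happ, hσdef, Equiv.swap_apply_right]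
    have hrest : (WithLp.toLp 2 (fun j : Fin n => (LinearIsometryEquiv.piLpCongrLeft 2 ℝ ℝ σ) p j.castSucc) :
        Esp n) = proj' i p := by
      ext j; rw [PiLp.toLp_apply, happ]; rfl
    rw [hlast, hrest]
    -- show p i = g (proj' i p)
    have hmem : proj' i p ∈ W := ⟨p, hp, rfl⟩
    obtain ⟨p₀, hp₀, hpw₀, hfw₀⟩ := hf0 _ hmem
    have h0 : |p i - p₀ i| ≤ L * ‖proj' i p - proj' i p₀‖ := key p hp p₀ hp₀
    rw [hpw₀] at h0
    simp only [sub_self, norm_zero, mul_zero] at h0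
    have : p i = p₀ i := by
      have := abs_nonneg (p i - p₀ i)
      have : |p i - p₀ i| = 0 := le_antisymm h0 this
      linarith [abs_eq_zero.1 this, sub_eq_zero.1 (abs_eq_zero.1 this)]
    rw [this, ← hfw₀, hgf hmem]

/-- The multivalued set is covered by a measurable set that is null for any measure vanishing
on Lipschitz hypersurfaces. -/
lemma multiset_cover (mono : Mono Rel) :
    ∃ N' : Set (Esp (n+1)), MeasurableSet N' ∧ MultiSet Rel ⊆ N' ∧
      ∀ κ : Measure (Esp (n+1)), (∀ S, IsLipschitzHypersurface n S → κ S = 0) → κ N' = 0 := by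
  have hex : ∀ (i : Fin (n+1)) (q : ℚ) (k R : ℕ), ∃ H, IsLipschitzHypersurface n H ∧
      {p | ∃ z z', Rel z p ∧ Rel z' p ∧ ‖z‖ ≤ (R:ℝ) ∧ ‖z'‖ ≤ (R:ℝ) ∧ z i ≤ (q:ℝ) ∧
        (q:ℝ) + 1/((k:ℝ)+1) ≤ z' i} ⊆ H :=
    fun i q k R => subset_hypersurface Rel mono i q (1/((k:ℝ)+1)) R (by positivity)
      (Nat.cast_nonneg R)
  choose H hH hsub using hex
  refine ⟨⋃ (i) (q) (k) (R), H i q k R, ?_, ?_, ?_⟩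
  · exact MeasurableSet.iUnion fun i => MeasurableSet.iUnion fun q =>
      MeasurableSet.iUnion fun k => MeasurableSet.iUnion fun R =>
        IsLipschitzHypersurface.measurableSet (hH i q k R)
  · rintro p ⟨z, z', hne, hz, hz'⟩
    have hcoord : ∃ i, z i ≠ z' i := by
      by_contra h; push_neg at h; exact hne (PiLp.ext h)
    obtain ⟨i, hi⟩ := hcoord
    have main : ∀ w w' : Esp (n+1), Rel w p → Rel w' p → w i < w' i →
        p ∈ ⋃ (i) (q) (k) (R), H i q k R := by
      intro w w' hw hw' hlt
      set d := w' i - w i with hd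
      have hd0 : 0 < d := by simp [hd]; linarith
      obtain ⟨k, hk⟩ := exists_nat_gt (2/d)
      have hk0 : (0:ℝ) < (k:ℝ) + 1 := by positivity
      have hδd : 1/((k:ℝ)+1) < d/2 := by
        have h2 : 2 < ((k:ℝ)+1)*d := (div_lt_iff₀ hd0).1 (by linarith)
        rw [div_lt_div_iff₀ hk0 (by norm_num : (0:ℝ) < 2)]
        nlinarith
      set δ := 1/((k:ℝ)+1) with hδdef
      have hδ0 : 0 < δ := by positivity
      obtain ⟨q, hq1, hq2⟩ := exists_rat_btwn (show w i < w i + δ by linarith)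
      obtain ⟨R, hR⟩ := exists_nat_ge (max ‖w‖ ‖w'‖)
      refine mem_iUnion.2 ⟨i, mem_iUnion.2 ⟨q, mem_iUnion.2 ⟨k, mem_iUnion.2 ⟨R, ?_⟩⟩⟩⟩
      refine hsub i q k R ⟨w, w', hw, hw', ?_, ?_, hq1.le, ?_⟩
      · exact le_trans (le_max_left _ _) hR
      · exact le_trans (le_max_right _ _) hR
      · have hd' : w i + d = w' i := by rw [hd]; ring
        linarith
    rcases lt_or_gt_of_ne hi with hlt | hlt
    · exact main z z' hz hz' hlt
    · exact main z' z hz' hz hlt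
  · intro κ hκ
    refine measure_iUnion_null fun i => measure_iUnion_null fun q =>
      measure_iUnion_null fun k => measure_iUnion_null fun R => hκ _ (hH i q k R)

/-- Points whose inverse image contains an element of norm at most `m`. -/
def Dm (m : ℕ) : Set (Esp (n+1)) := {p | ∃ z, ‖z‖ ≤ (m:ℝ) ∧ Rel z p}

noncomputable def selFun (m : ℕ) : Esp (n+1) → Esp (n+1) :=
  fun p => if h : ∃ z, ‖z‖ ≤ (m:ℝ) ∧ Rel z p then h.choose else 0

lemma selFun_spec {m : ℕ} {p : Esp (n+1)} (hp : p ∈ Dm Rel m) :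
    ‖selFun Rel m p‖ ≤ (m:ℝ) ∧ Rel (selFun Rel m p) p := by
  rw [selFun, dif_pos (show ∃ z, ‖z‖ ≤ (m:ℝ) ∧ Rel z p from hp)]
  exact Exists.choose_spec (show ∃ z, ‖z‖ ≤ (m:ℝ) ∧ Rel z p from hp)
  

lemma Dm_closed (seqcl : SeqCl Rel) (m : ℕ) : IsClosed (Dm Rel m) := by
  apply IsSeqClosed.isClosed
  intro ps p hmem htend
  choose zs hzs hrel using hmem
  have hball : ∀ k, zs k ∈ Metric.closedBall (0 : Esp (n+1)) m := by
    intro k; rw [Metric.mem_closedBall, dist_zero_right]; exact hzs k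
  obtain ⟨z, hzball, φ, hφ, hzt⟩ :=
    (isCompact_closedBall (0 : Esp (n+1)) m).tendsto_subseq hball
  refine ⟨z, ?_, ?_⟩
  · rw [Metric.mem_closedBall, dist_zero_right] at hzball; exact hzball
  · exact seqcl (fun k => zs (φ k)) (fun k => ps (φ k)) z p hzt
      (htend.comp hφ.tendsto_atTop) (fun k => hrel (φ k))

lemma selFun_continuousOn (seqcl : SeqCl Rel) (m : ℕ) :
    ContinuousOn (selFun Rel m) (Dm Rel m ∩ (MultiSet Rel)ᶜ) := by
  intro p hp
  have hpD : p ∈ Dm Rel m := hp.1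
  have hpM : p ∉ MultiSet Rel := hp.2
  have hspec := selFun_spec Rel hpD
  rw [ContinuousWithinAt]
  apply Filter.tendsto_of_subseq_tendsto
  intro ns hns
  have hnsp : Filter.Tendsto ns Filter.atTop (nhds p) :=
    hns.mono_right nhdsWithin_le_nhds
  have hmem : ∀ᶠ k in Filter.atTop, ns k ∈ Dm Rel m ∩ (MultiSet Rel)ᶜ :=
    hns.eventually (eventually_mem_nhdsWithin.mono (fun x hx => hx))
  obtain ⟨n₀, hn₀⟩ := Filter.eventually_atTop.1 hmem
  set ns' : ℕ → Esp (n+1) := fun k => ns (k + n₀) with hns'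
  have hns'mem : ∀ k, ns' k ∈ Dm Rel m := fun k => (hn₀ (k + n₀) (Nat.le_add_left _ _)).1
  have hns'p : Filter.Tendsto ns' Filter.atTop (nhds p) :=
    hnsp.comp (Filter.tendsto_add_atTop_nat n₀)
  have hball : ∀ k, selFun Rel m (ns' k) ∈ Metric.closedBall (0 : Esp (n+1)) m := by
    intro k
    rw [Metric.mem_closedBall, dist_zero_right]
    exact (selFun_spec Rel (hns'mem k)).1
  obtain ⟨a, _, φ, hφ, hat⟩ :=
    (isCompact_closedBall (0 : Esp (n+1)) m).tendsto_subseq hball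
  have hrela : Rel a p :=
    seqcl (fun k => selFun Rel m (ns' (φ k))) (fun k => ns' (φ k)) a p hat
      (hns'p.comp hφ.tendsto_atTop) (fun k => (selFun_spec Rel (hns'mem (φ k))).2)
  have ha : a = selFun Rel m p := by
    by_contra hne
    exact hpM ⟨a, selFun Rel m p, hne, hrela, hspec.2⟩
  exact ⟨fun k => φ k + n₀, by rw [← ha]; exact hat⟩

lemma exists_measurable_selection (seqcl : SeqCl Rel) (m : ℕ) {A : Set (Esp (n+1))}
    (hA : MeasurableSet A) (hsub : A ⊆ Dm Rel m ∩ (MultiSet Rel)ᶜ) :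
    ∃ F : Esp (n+1) → Esp (n+1), Measurable F ∧ ∀ p ∈ A, F p = selFun Rel m p := by
  classical
  have hcont : ContinuousOn (selFun Rel m) A := (selFun_continuousOn Rel seqcl m).mono hsub
  have hrest : Continuous (A.restrict (selFun Rel m)) :=
    continuousOn_iff_continuous_restrict.1 hcont
  refine ⟨fun p => if h : p ∈ A then A.restrict (selFun Rel m) ⟨p, h⟩ else 0, ?_, ?_⟩
  · exact Measurable.dite hrest.measurable measurable_const hA
  · intro p hp; simp [hp, Set.restrict]

end Rel

section EReal

variable {m : ℕ} {u : Esp m → EReal}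

lemma subdiff_ne_top {x0 : Esp m} (hx0 : u x0 ≠ ⊤) {z p : Esp m}
    (hp : p ∈ subdiffE m u z) : u z ≠ ⊤ := by
  intro h
  have h1 := hp x0
  rw [h, EReal.top_add_coe] at h1
  exact hx0 (top_le_iff.1 h1)

lemma subdiff_real (hbot : ∀ x, u x ≠ ⊥) {z p x : Esp m} (hp : p ∈ subdiffE m u z)
    (hz : u z ≠ ⊤) (hx : u x ≠ ⊤) :
    (u z).toReal + (inner ℝ p (x - z) : ℝ) ≤ (u x).toReal := by
  have h := hp x
  rw [← EReal.coe_toReal hz (hbot z), ← EReal.coe_toReal hx (hbot x), ← EReal.coe_add] at h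
  exact_mod_cast h

end EReal

end MassBalance

open MassBalance

/-- Mass balance formula: if `u` is a lower semicontinuous convex function with values in
`ℝ ∪ {+∞}`, `(∇u)_# μ = ν` (where `T = ∇u` `μ`-a.e., i.e. the subdifferential of `u` is the
singleton `{T x}` for `μ`-a.e. `x`), and `μ`, `ν` vanish on every Lipschitz hypersurface,
then `μ(E) = ν(∂u(E))` for every Borel set `E`. -/
theorem mass_balance_formula (n : ℕ) (u : EuclideanSpace ℝ (Fin (n + 1)) → EReal)
    (hlsc : LowerSemicontinuous u)
    (hconv : Convex ℝ {p : EuclideanSpace ℝ (Fin (n + 1)) × ℝ | u p.1 ≤ (p.2 : EReal)})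
    (hbot : ∀ x, u x ≠ ⊥)
    (μ ν : Measure (EuclideanSpace ℝ (Fin (n + 1))))
    (hμ : ∀ S, IsLipschitzHypersurface n S → μ S = 0)
    (hν : ∀ S, IsLipschitzHypersurface n S → ν S = 0)
    (T : EuclideanSpace ℝ (Fin (n + 1)) → EuclideanSpace ℝ (Fin (n + 1)))
    (hT : ∀ᵐ x ∂μ, subdiffE (n + 1) u x = {T x})
    (hpush : Measure.map T μ = ν) :
    ∀ E : Set (EuclideanSpace ℝ (Fin (n + 1))), MeasurableSet E →
      μ E = ν (⋃ z ∈ E, subdiffE (n + 1) u z) := by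
  classical
  intro E hE
  by_cases htop : ∀ x, u x = ⊤
  · -- degenerate case: `u ≡ ⊤`, hence every subdifferential is everything and `μ = 0`.
    have hsub : ∀ z, subdiffE (n+1) u z = univ := by
      intro z; ext p
      simp only [subdiffE, mem_setOf_eq, mem_univ, iff_true]
      intro x; rw [htop x]; exact le_top
    have hμ0 : μ = 0 := by
      have hae : ∀ᵐ x ∂μ, False := by
        filter_upwards [hT] with x hx
        have h1 : (0 : Esp (n+1)) ∈ subdiffE (n+1) u x := by rw [hsub]; trivial
        have h2 : (EuclideanSpace.single (0 : Fin (n+1)) (1:ℝ)) ∈ subdiffE (n+1) u x := by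
          rw [hsub]; trivial
        rw [hx, mem_singleton_iff] at h1 h2
        have h3 : (EuclideanSpace.single (0 : Fin (n+1)) (1:ℝ)) = (0 : Esp (n+1)) :=
          h2.trans h1.symm
        have h4 := congrArg (fun v : Esp (n+1) => v 0) h3
        simp [EuclideanSpace.single_apply] at h4
      have : μ {x : Esp (n+1) | ¬ False} = 0 := (MeasureTheory.ae_iff).1 hae
      simp only [not_false_iff, setOf_true] at this
      exact Measure.measure_univ_eq_zero.1 this
    rw [← hpush, hμ0, Measure.map_zero]
    simp
  · push_neg at htop
    obtain ⟨x0, hx0⟩ := htop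
    set Rel : Esp (n+1) → Esp (n+1) → Prop := fun z p => p ∈ subdiffE (n+1) u z with hReldef
    -- monotonicity
    have mono : Mono Rel := by
      intro z p z' p' hzp hz'p'
      have hz : u z ≠ ⊤ := subdiff_ne_top hx0 hzp
      have hz' : u z' ≠ ⊤ := subdiff_ne_top hx0 hz'p'
      have h1 := subdiff_real hbot hzp hz hz'
      have h2 := subdiff_real hbot hz'p' hz' hz
      have expand : (inner ℝ (z - z') (p - p') : ℝ) +
          ((inner ℝ p (z' - z) : ℝ) + (inner ℝ p' (z - z') : ℝ)) = 0 := by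
        simp only [inner_sub_left, inner_sub_right]
        rw [real_inner_comm p z', real_inner_comm p z, real_inner_comm p' z,
          real_inner_comm p' z']
        ring
      linarith
    -- sequential closedness
    have seqcl : SeqCl Rel := by
      intro zs ps z p hzt hpt hrel
      intro y
      by_cases hy : u y = ⊤
      · rw [hy]; exact le_top
      have hyc : u y = ((u y).toReal : EReal) := (EReal.coe_toReal hy (hbot y)).symm
      set c := (u y).toReal with hc
      set r := (inner ℝ p (y - z) : ℝ) with hr
      have hrt : Filter.Tendsto (fun k => (inner ℝ (ps k) (y - zs k) : ℝ))
          Filter.atTop (nhds r) :=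
        Filter.Tendsto.inner hpt (tendsto_const_nhds.sub hzt)
      suffices hle : u z ≤ ((c - r : ℝ) : EReal) by
        calc u z + (r : EReal) ≤ ((c - r : ℝ) : EReal) + (r : EReal) := add_le_add_left hle _
          _ = (c : EReal) := by rw [← EReal.coe_add]; norm_num
          _ = u y := hyc.symm
      by_contra hgt
      push_neg at hgt
      have hd' : ∃ d' : ℝ, c - r < d' ∧ (d' : EReal) < u z := by
        rcases eq_or_ne (u z) ⊤ with h | h
        · exact ⟨c - r + 1, by linarith, by rw [h]; exact EReal.coe_lt_top _⟩
        · set a := (u z).toReal with ha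
          have hz2 : u z = (a : EReal) := (EReal.coe_toReal h (hbot z)).symm
          rw [hz2] at hgt
          have h5 : c - r < a := EReal.coe_lt_coe_iff.1 hgt
          refine ⟨(c - r + a)/2, by linarith, ?_⟩
          rw [hz2]
          exact_mod_cast (by linarith : (c - r + a)/2 < a)
      obtain ⟨d', hd1, hd2⟩ := hd'
      have hev : ∀ᶠ w in nhds z, (d' : EReal) < u w := hlsc z _ hd2
      have hev2 : ∀ᶠ k in Filter.atTop, (d' : EReal) < u (zs k) := hzt.eventually hev
      have hkey : ∀ᶠ k in Filter.atTop, d' + (inner ℝ (ps k) (y - zs k) : ℝ) ≤ c := by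
        filter_upwards [hev2] with k hk
        have h := hrel k y
        rw [← hyc.symm] at h
        have h2 : ((d' : EReal) + ((inner ℝ (ps k) (y - zs k) : ℝ) : EReal)) ≤ (c : EReal) :=
          le_trans (add_le_add_left hk.le _) (by rw [← hyc]; exact hrel k y)
        rw [← EReal.coe_add] at h2
        exact EReal.coe_le_coe_iff.1 h2
      have hlim : d' + r ≤ c := le_of_tendsto (tendsto_const_nhds.add hrt) hkey
      linarith
    -- the flipped relation (for the `μ` side)
    set Rel2 : Esp (n+1) → Esp (n+1) → Prop := fun p x => Rel x p with hRel2def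
    have mono2 : Mono Rel2 := by
      intro p x p' x' h1 h2
      have := mono x p x' p' h1 h2
      rwa [real_inner_comm]
    have seqcl2 : SeqCl Rel2 := by
      intro ps xs p x hpt hxt hrel
      exact seqcl xs ps x p hxt hpt hrel
    -- null bad sets
    obtain ⟨N', hN'meas, hN'sub, hN'null⟩ := multiset_cover Rel mono
    obtain ⟨N₂', hN₂meas, hN₂sub, hN₂null⟩ := multiset_cover Rel2 mono2
    have hνN' : ν N' = 0 := hN'null ν hν
    have hμN₂ : μ N₂' = 0 := hN₂null μ hμ
    -- the good set G
    set G : Set (Esp (n+1)) := {x | subdiffE (n+1) u x = {T x}} with hGdef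
    have hGc : μ Gᶜ = 0 := by
      have := (MeasureTheory.ae_iff).1 hT
      exact this
    -- T is a.e.-measurable
    have hsm2 : ∀ mm : ℕ, MeasurableSet (Dm Rel2 mm ∩ N₂'ᶜ) := fun mm =>
      ((Dm_closed Rel2 seqcl2 mm).measurableSet).inter hN₂meas.compl
    choose F2 hF2meas hF2eq using fun mm : ℕ =>
      exists_measurable_selection Rel2 seqcl2 mm (hsm2 mm)
        (inter_subset_inter_right _ (compl_subset_compl.2 hN₂sub))
    have hTx : ∀ x ∈ G, Rel2 (T x) x := by
      intro x hx
      have : T x ∈ subdiffE (n+1) u x := by rw [hx]; exact rfl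
      exact this
    have haem : AEMeasurable T μ := by
      have hres : ∀ mm : ℕ, AEMeasurable T (μ.restrict (Dm Rel2 mm ∩ N₂'ᶜ)) := by
        intro mm
        apply (hF2meas mm).aemeasurable.congr
        rw [Filter.EventuallyEq, MeasureTheory.ae_iff]
        rw [Measure.restrict_apply' (hsm2 mm)]
        apply measure_mono_null _ hGc
        intro x hx
        simp only [mem_inter_iff, mem_setOf_eq] at hx
        intro hxG
        apply hx.1
        have h1 : F2 mm x = selFun Rel2 mm x := hF2eq mm x hx.2
        have h2 := selFun_spec Rel2 (hx.2.1)
        have h3 : selFun Rel2 mm x ∈ subdiffE (n+1) u x := h2.2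
        rw [hxG, mem_singleton_iff] at h3
        rw [h1, h3]
      have hU : AEMeasurable T (μ.restrict (⋃ mm, Dm Rel2 mm ∩ N₂'ᶜ)) :=
        aemeasurable_iUnion_iff.2 hres
      have hUmeas : MeasurableSet (⋃ mm, Dm Rel2 mm ∩ N₂'ᶜ) := MeasurableSet.iUnion hsm2
      have hUc : μ (⋃ mm, Dm Rel2 mm ∩ N₂'ᶜ)ᶜ = 0 := by
        apply measure_mono_null _ (measure_union_null hGc hμN₂)
        intro x hx
        simp only [mem_compl_iff, mem_iUnion, not_exists] at hx
        by_cases hxG : x ∈ G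
        · by_cases hxN : x ∈ N₂'
          · exact Or.inr hxN
          · exfalso
            obtain ⟨mm, hmm⟩ := exists_nat_ge ‖T x‖
            exact hx mm ⟨⟨T x, hmm, hTx x hxG⟩, hxN⟩
        · exact Or.inl hxG
      have : μ.restrict (⋃ mm, Dm Rel2 mm ∩ N₂'ᶜ)ᶜ = 0 := Measure.restrict_eq_zero.2 hUc
      have hfull := Measure.restrict_add_restrict_compl (μ := μ) hUmeas
      rw [← hfull]
      exact hU.add_measure (by rw [this]; exact aemeasurable_zero_measure)
    -- measurable selections on the ν side
    have hsm : ∀ mm : ℕ, MeasurableSet (Dm Rel mm ∩ N'ᶜ) := fun mm =>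
      ((Dm_closed Rel seqcl mm).measurableSet).inter hN'meas.compl
    choose F hFmeas hFeq using fun mm : ℕ =>
      exists_measurable_selection Rel seqcl mm (hsm mm)
        (inter_subset_inter_right _ (compl_subset_compl.2 hN'sub))
    set V : Set (Esp (n+1)) := ⋃ mm, (Dm Rel mm ∩ N'ᶜ) ∩ F mm ⁻¹' E with hVdef
    have hVmeas : MeasurableSet V :=
      MeasurableSet.iUnion fun mm => (hsm mm).inter ((hFmeas mm) hE)
    set Fset : Set (Esp (n+1)) := ⋃ z ∈ E, subdiffE (n+1) u z with hFsetdef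
    -- direction 1 : μ E ≤ ν Fset
    obtain ⟨B, hFB, hBmeas, hBeq⟩ := exists_measurable_superset ν Fset
    have dir1 : μ E ≤ ν Fset := by
      have hEsub : E ∩ G ⊆ T ⁻¹' B := by
        rintro x ⟨hxE, hxG⟩
        apply hFB
        exact mem_iUnion₂.2 ⟨x, hxE, hTx x hxG⟩
      calc μ E ≤ μ (E ∩ G) + μ (E \ G) := measure_le_inter_add_diff μ E G
        _ = μ (E ∩ G) := by
            rw [measure_mono_null (diff_subset_compl E G) hGc, add_zero]
        _ ≤ μ (T ⁻¹' B) := measure_mono hEsub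
        _ = Measure.map T μ B := (Measure.map_apply_of_aemeasurable haem hBmeas).symm
        _ = ν B := by rw [hpush]
        _ = ν Fset := hBeq
    -- direction 2 : ν Fset ≤ μ E
    have dir2 : ν Fset ≤ μ E := by
      have hsubV : Fset ∩ N'ᶜ ⊆ V := by
        rintro p ⟨hpF, hpN⟩
        obtain ⟨z, hzE, hzp⟩ := mem_iUnion₂.1 hpF
        obtain ⟨mm, hmm⟩ := exists_nat_ge ‖z‖
        have hpD : p ∈ Dm Rel mm := ⟨z, hmm, hzp⟩
        have hpDN : p ∈ Dm Rel mm ∩ N'ᶜ := ⟨hpD, hpN⟩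
        refine mem_iUnion.2 ⟨mm, hpDN, ?_⟩
        have h1 : F mm p = selFun Rel mm p := hFeq mm p hpDN
        have h2 := selFun_spec Rel hpD
        have h3 : selFun Rel mm p = z := by
          by_contra hne
          exact hpN (hN'sub ⟨selFun Rel mm p, z, hne, h2.2, hzp⟩)
        simp only [mem_preimage, h1, h3]
        exact hzE
      have hVpre : T ⁻¹' V ∩ G ⊆ E := by
        rintro x ⟨hxV, hxG⟩
        obtain ⟨mm, hmem⟩ := mem_iUnion.1 hxV
        obtain ⟨⟨hD, hN⟩, hFE⟩ := hmem
        have h1 : F mm (T x) = selFun Rel mm (T x) := hFeq mm (T x) ⟨hD, hN⟩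
        have h2 := selFun_spec Rel hD
        have h3 : selFun Rel mm (T x) = x := by
          by_contra hne
          exact hN (hN'sub ⟨selFun Rel mm (T x), x, hne, h2.2, hTx x hxG⟩)
        rw [mem_preimage, h1, h3] at hFE
        exact hFE
      calc ν Fset ≤ ν ((Fset ∩ N'ᶜ) ∪ N') := by
            apply measure_mono
            intro p hp
            by_cases h : p ∈ N'
            · exact Or.inr h
            · exact Or.inl ⟨hp, h⟩
        _ ≤ ν (Fset ∩ N'ᶜ) + ν N' := measure_union_le _ _
        _ = ν (Fset ∩ N'ᶜ) := by rw [hνN', add_zero]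
        _ ≤ ν V := measure_mono hsubV
        _ = Measure.map T μ V := by rw [hpush]
        _ = μ (T ⁻¹' V) := Measure.map_apply_of_aemeasurable haem hVmeas
        _ ≤ μ (T ⁻¹' V ∩ G) + μ (T ⁻¹' V \ G) := measure_le_inter_add_diff μ _ G
        _ ≤ μ E + 0 := by
            apply add_le_add (measure_mono hVpre)
            rw [← hGc]
            exact measure_mono (diff_subset_compl _ _)
        _ = μ E := add_zero _
    exact le_antisymm dir1 dir2
end
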